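/- Let T be an x-monotone terrain in R^2 given by a piecewise-linear function f, and let u = v_i be a vertex of T. If the vertical segment from u up to a point w is a watchtower (w sees all of T), then for the terrain T' obtained by raising v_i to the top t_i of its interval (same x-coordinate, larger y-coordinate, with all other vertices unchanged, and w above t_i), the vertical segment from t_i to w is a watchtower for T': w sees all of T'. In particular the watchtower height does not increase. -/

import Mathlib

/-- The `y`-value at abscissa `x` of the line through points `a` and `b`. -/
noncomputable def lineY (a b : ℝ × ℝ) (x : ℝ) : ℝ :=
  a.2 + (b.2 - a.2) / (b.1 - a.1) * (x - a.1)

lemma lineY_left (a b : ℝ × ℝ) : lineY a b a.1 = a.2 := by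
  simp [lineY]

lemma lineY_right (a b : ℝ × ℝ) (h : a.1 ≠ b.1) : lineY a b b.1 = b.2 := by
  have hd : b.1 - a.1 ≠ 0 := sub_ne_zero.mpr (Ne.symm h)
  simp only [lineY]
  field_simp
  ring

lemma lineY_mem (a b c d : ℝ × ℝ) (s u x : ℝ)
    (hx : x ∈ Set.Icc s u)
    (h1 : lineY a b s ≤ lineY c d s) (h2 : lineY a b u ≤ lineY c d u) :
    lineY a b x ≤ lineY c d x := by
  obtain ⟨hs, hu⟩ := hx
  rcases eq_or_lt_of_le (le_trans hs hu) with h | h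
  · have hxs : x = s := le_antisymm (by rw [h]; exact hu) hs
    rwa [hxs]
  · have hus : u - s ≠ 0 := ne_of_gt (by linarith)
    set t := (x - s) / (u - s) with htdef
    have ht0 : 0 ≤ t := div_nonneg (by linarith) (by linarith)
    have ht1 : t ≤ 1 := (div_le_one (by linarith)).mpr (by linarith)
    have hx' : x = (1 - t) * s + t * u := by
      rw [htdef]
      field_simp
      ring
    have key : ∀ e f : ℝ × ℝ, lineY e f x = (1 - t) * lineY e f s + t * lineY e f u := by
      intro e f
      rw [hx']
      simp only [lineY]
      ring
    rw [key a b, key c d]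
    have k1 := mul_le_mul_of_nonneg_left h1 (by linarith : (0:ℝ) ≤ 1 - t)
    have k2 := mul_le_mul_of_nonneg_left h2 ht0
    linarith

lemma vmono (n : ℕ) (v : ℕ → ℝ × ℝ)
    (hmono : ∀ k, k + 1 < n → (v k).1 < (v (k + 1)).1) :
    ∀ j k, j ≤ k → k < n → (v j).1 ≤ (v k).1 := by
  intro j k hjk hk
  induction k, hjk using Nat.le_induction with
  | base => exact le_refl _
  | succ k hjk ih =>
      exact le_trans (ih (by omega)) (le_of_lt (hmono k hk))

lemma exists_interval (n : ℕ) (hn : 2 ≤ n) (v : ℕ → ℝ × ℝ)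
    (hmono : ∀ k, k + 1 < n → (v k).1 < (v (k + 1)).1)
    (x : ℝ) (hx : x ∈ Set.Icc (v 0).1 (v (n - 1)).1) :
    ∃ k, k + 1 < n ∧ x ∈ Set.Icc (v k).1 (v (k + 1)).1 := by
  classical
  set k := Nat.findGreatest (fun j => (v j).1 ≤ x) (n - 2) with hk
  have hP : (v k).1 ≤ x := Nat.findGreatest_spec (P := fun j => (v j).1 ≤ x) (Nat.zero_le _) hx.1
  have hle : k ≤ n - 2 := Nat.findGreatest_le _
  refine ⟨k, by omega, hP, ?_⟩
  rcases eq_or_lt_of_le hle with he | hlt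
  · have h2 : k + 1 = n - 1 := by omega
    rw [h2]; exact hx.2
  · have hng := Nat.findGreatest_is_greatest (by omega : k < k + 1) (by omega : k + 1 ≤ n - 2)
    exact le_of_lt (lt_of_not_ge hng)

lemma vertex_val (n : ℕ) (hn : 2 ≤ n) (v : ℕ → ℝ × ℝ) (f : ℝ → ℝ)
    (hmono : ∀ k, k + 1 < n → (v k).1 < (v (k + 1)).1)
    (hf : ∀ k, k + 1 < n → ∀ x ∈ Set.Icc (v k).1 (v (k + 1)).1,
      f x = lineY (v k) (v (k + 1)) x)
    (j : ℕ) (hj : j < n) : f (v j).1 = (v j).2 := by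
  by_cases h : j + 1 < n
  · rw [hf j h (v j).1 ⟨le_refl _, le_of_lt (hmono j h)⟩, lineY_left]
  · have hj1 : 1 ≤ j := by omega
    obtain ⟨m, rfl⟩ : ∃ m, j = m + 1 := ⟨j - 1, by omega⟩
    rw [hf m hj (v (m + 1)).1 ⟨le_of_lt (hmono m hj), le_refl _⟩,
        lineY_right _ _ (ne_of_lt (hmono m hj))]

/-- Raising the base vertex of a discrete watchtower: let `f` be the piecewise-linear
terrain with vertices `v 0, …, v (n-1)`, let `w` be vertically above the vertex `v i`
and see all of the terrain, and let `f'` be the terrain obtained by raising `v i` to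
`ti` (same `x`-coordinate, `y`-coordinate at least that of `v i`, with `w` on or above
`ti` and all other vertices unchanged).  Then `w` sees all of the new terrain, so the
vertical segment from `ti` to `w` is a watchtower for it. -/
theorem stmt9 (n : ℕ) (hn : 2 ≤ n) (v v' : ℕ → ℝ × ℝ) (f f' : ℝ → ℝ)
    (i : ℕ) (hi : i < n) (ti w : ℝ × ℝ)
    (hmono : ∀ k, k + 1 < n → (v k).1 < (v (k + 1)).1)
    (hf : ∀ k, k + 1 < n → ∀ x ∈ Set.Icc (v k).1 (v (k + 1)).1,
      f x = lineY (v k) (v (k + 1)) x)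
    (htix : ti.1 = (v i).1) (htiy : (v i).2 ≤ ti.2)
    (hv'i : v' i = ti) (hv' : ∀ k, k ≠ i → v' k = v k)
    (hf' : ∀ k, k + 1 < n → ∀ x ∈ Set.Icc (v' k).1 (v' (k + 1)).1,
      f' x = lineY (v' k) (v' (k + 1)) x)
    (hwx : w.1 = (v i).1) (hwy : ti.2 ≤ w.2)
    (hsee : ∀ p : ℝ × ℝ, p.1 ∈ Set.Icc (v 0).1 (v (n - 1)).1 → p.2 = f p.1 →
      ∀ r ∈ segment ℝ w p, f r.1 ≤ r.2) :
    ∀ p : ℝ × ℝ, p.1 ∈ Set.Icc (v' 0).1 (v' (n - 1)).1 → p.2 = f' p.1 →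
      ∀ r ∈ segment ℝ w p, f' r.1 ≤ r.2 := by
  intro p hp hpf r hr
  have hvx : ∀ k, (v' k).1 = (v k).1 := by
    intro k
    by_cases h : k = i
    · rw [h, hv'i, htix]
    · rw [hv' k h]
  have hmono2 : ∀ k, k + 1 < n → (v' k).1 < (v' (k + 1)).1 := by
    intro k hk
    rw [hvx, hvx]
    exact hmono k hk
  have hmono' := vmono n v hmono
  have hF : ∀ x ∈ Set.Icc (v 0).1 (v (n - 1)).1, f x ≤ f' x := by
    intro x hx
    obtain ⟨k, hk, hxk⟩ := exists_interval n hn v hmono x hx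
    have hxk' : x ∈ Set.Icc (v' k).1 (v' (k + 1)).1 := by
      rw [hvx, hvx]; exact hxk
    rw [hf k hk x hxk, hf' k hk x hxk']
    have hy : ∀ m, (v m).2 ≤ (v' m).2 := by
      intro m
      by_cases h : m = i
      · rw [h, hv'i]; exact htiy
      · rw [hv' m h]
    apply lineY_mem _ _ _ _ (v k).1 (v (k + 1)).1 x hxk
    · rw [lineY_left]
      have h1 : lineY (v' k) (v' (k + 1)) (v k).1 = (v' k).2 := by
        rw [← hvx k]; exact lineY_left _ _
      rw [h1]; exact hy k
    · rw [lineY_right _ _ (ne_of_lt (hmono k hk))]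
      have h1 : lineY (v' k) (v' (k + 1)) (v (k + 1)).1 = (v' (k + 1)).2 := by
        rw [← hvx (k + 1)]
        exact lineY_right _ _ (ne_of_lt (hmono2 k hk))
      rw [h1]; exact hy (k + 1)
  have hwdom : w.1 ∈ Set.Icc (v 0).1 (v (n - 1)).1 := by
    rw [hwx]
    exact ⟨hmono' 0 i (Nat.zero_le _) hi, hmono' i (n - 1) (by omega) (by omega)⟩
  have hpdom : p.1 ∈ Set.Icc (v 0).1 (v (n - 1)).1 := by
    rwa [hvx 0, hvx (n - 1)] at hp
  have hf'w : f' w.1 = ti.2 := by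
    have h := vertex_val n hn v' f' hmono2 hf' i hi
    rw [hv'i] at h
    rw [hwx, ← htix]
    exact h
  obtain ⟨a, b, ha, hb, hab, habr⟩ := hr
  have hr1 : r.1 = a * w.1 + b * p.1 := by
    rw [← habr]; simp
  have hr2 : r.2 = a * w.2 + b * p.2 := by
    rw [← habr]; simp
  by_cases hwp : w.1 = p.1
  · -- vertical segment
    have hp2 : p.2 = ti.2 := by rw [hpf, ← hwp, hf'w]
    have hr1' : r.1 = w.1 := by
      have h3 : a * w.1 + b * w.1 = w.1 := by rw [← add_mul, hab, one_mul]
      rw [hr1, ← hwp]; linarith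
    rw [hr1', hf'w]
    have h4 := mul_le_mul_of_nonneg_left hwy ha
    have h5 : a * ti.2 + b * ti.2 = ti.2 := by rw [← add_mul, hab, one_mul]
    rw [hr2, hp2]
    linarith
  · have hd : p.1 - w.1 ≠ 0 := sub_ne_zero.mpr (Ne.symm hwp)
    have hb' : r.1 - w.1 = b * (p.1 - w.1) := by
      have ha' : a = 1 - b := by linarith
      rw [hr1, ha']; ring
    have hrY : lineY w p r.1 = r.2 := by
      simp only [lineY]
      rw [show r.1 - w.1 = b * (p.1 - w.1) from hb', hr2]
      have ha' : a = 1 - b := by linarith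
      rw [ha']
      field_simp
      ring
    have hrlo : min w.1 p.1 ≤ r.1 := by
      have h1 := mul_le_mul_of_nonneg_left (min_le_left w.1 p.1) ha
      have h2 := mul_le_mul_of_nonneg_left (min_le_right w.1 p.1) hb
      have h3 : a * min w.1 p.1 + b * min w.1 p.1 = min w.1 p.1 := by
        rw [← add_mul, hab, one_mul]
      rw [hr1]; linarith
    have hrhi : r.1 ≤ max w.1 p.1 := by
      have h1 := mul_le_mul_of_nonneg_left (le_max_left w.1 p.1) ha
      have h2 := mul_le_mul_of_nonneg_left (le_max_right w.1 p.1) hb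
      have h3 : a * max w.1 p.1 + b * max w.1 p.1 = max w.1 p.1 := by
        rw [← add_mul, hab, one_mul]
      rw [hr1]; linarith
    have hG : ∀ x, min w.1 p.1 ≤ x → x ≤ max w.1 p.1 → f' x ≤ lineY w p x := by
      intro x hxlo hxhi
      have hxdom : x ∈ Set.Icc (v 0).1 (v (n - 1)).1 :=
        ⟨le_trans (le_min hwdom.1 hpdom.1) hxlo, le_trans hxhi (max_le hwdom.2 hpdom.2)⟩
      obtain ⟨k, hk, hxk⟩ := exists_interval n hn v hmono x hxdom
      have hxk' : x ∈ Set.Icc (v' k).1 (v' (k + 1)).1 := by rw [hvx, hvx]; exact hxk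
      rw [hf' k hk x hxk']
      have hend : ∀ e, (v k).1 ≤ e → e ≤ (v (k + 1)).1 → min w.1 p.1 ≤ e →
          e ≤ max w.1 p.1 →
          (e = (v k).1 ∨ e = (v (k + 1)).1 ∨ e = w.1 ∨ e = p.1) →
          lineY (v' k) (v' (k + 1)) e ≤ lineY w p e := by
        intro e he1 he2 he3 he4 he5
        have hef' : lineY (v' k) (v' (k + 1)) e = f' e :=
          (hf' k hk e (by rw [hvx, hvx]; exact ⟨he1, he2⟩)).symm
        rw [hef']
        by_cases hew : e = w.1
        · rw [hew, hf'w, lineY_left]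
          exact hwy
        by_cases hep : e = p.1
        · rw [hep, lineY_right w p hwp]
          exact le_of_eq hpf.symm
        obtain ⟨j, hjn, hej⟩ : ∃ j, j < n ∧ e = (v j).1 := by
          rcases he5 with h | h | h | h
          · exact ⟨k, by omega, h⟩
          · exact ⟨k + 1, hk, h⟩
          · exact absurd h hew
          · exact absurd h hep
        have hji : j ≠ i := by
          rintro rfl
          exact hew (hej.trans hwx.symm)
        have h5 : f' e = (v j).2 := by
          have h := vertex_val n hn v' f' hmono2 hf' j hjn
          rw [hv' j hji] at h
          rw [hej]; exact h
        have h6 : f e = (v j).2 := by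
          rw [hej]; exact vertex_val n hn v f hmono hf j hjn
        set t := (e - w.1) / (p.1 - w.1) with htdef
        have htd : t * (p.1 - w.1) = e - w.1 := div_mul_cancel₀ _ hd
        have htt : 0 ≤ t ∧ t ≤ 1 := by
          rcases lt_or_gt_of_ne hwp with hlt | hlt
          · have hle : w.1 ≤ e := by rw [min_eq_left hlt.le] at he3; exact he3
            have heu : e ≤ p.1 := by rw [max_eq_right hlt.le] at he4; exact he4
            exact ⟨div_nonneg (by linarith) (by linarith),
              (div_le_one (by linarith)).mpr (by linarith)⟩
          · have hle : p.1 ≤ e := by rw [min_eq_right hlt.le] at he3; exact he3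
            have heu : e ≤ w.1 := by rw [max_eq_left hlt.le] at he4; exact he4
            constructor
            · rw [htdef, div_nonneg_iff]
              right; exact ⟨by linarith, by linarith⟩
            · rw [htdef, div_le_one_iff]
              right; right; exact ⟨by linarith, by linarith⟩
        set q : ℝ × ℝ := (p.1, f p.1) with hqdef
        have hqseg : (1 - t) • w + t • q ∈ segment ℝ w q :=
          ⟨1 - t, t, by linarith [htt.2], htt.1, by ring, rfl⟩
        have hkey := hsee q hpdom rfl ((1 - t) • w + t • q) hqseg
        have hseg1 : ((1 - t) • w + t • q).1 = e := by
          simp only [Prod.fst_add, Prod.smul_fst, smul_eq_mul, hqdef]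
          nlinarith [htd]
        have hseg2 : ((1 - t) • w + t • q).2 = (1 - t) * w.2 + t * f p.1 := by
          simp [hqdef]
        rw [hseg1, hseg2] at hkey
        have hfp : f p.1 ≤ p.2 := by
          rw [hpf]; exact hF p.1 hpdom
        have hLwp : lineY w p e = (1 - t) * w.2 + t * p.2 := by
          simp only [lineY]
          rw [show e - w.1 = t * (p.1 - w.1) from htd.symm]
          field_simp
          ring
        rw [h5, hLwp]
        have hmul := mul_le_mul_of_nonneg_left hfp htt.1
        linarith [h6, hkey]
      have hxs : x ∈ Set.Icc (max (v k).1 (min w.1 p.1))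
          (min (v (k + 1)).1 (max w.1 p.1)) :=
        ⟨max_le hxk.1 hxlo, le_min hxk.2 hxhi⟩
      apply lineY_mem _ _ _ _ _ _ _ hxs
      · apply hend
        · exact le_max_left _ _
        · exact le_trans (max_le hxk.1 hxlo) hxk.2
        · exact le_max_right _ _
        · exact le_trans (max_le hxk.1 hxlo) hxhi
        · rcases max_choice (v k).1 (min w.1 p.1) with h | h
          · exact Or.inl h
          · rcases min_choice w.1 p.1 with h' | h'
            · exact Or.inr (Or.inr (Or.inl (h.trans h')))
            · exact Or.inr (Or.inr (Or.inr (h.trans h')))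
      · apply hend
        · exact le_trans hxk.1 (le_min hxk.2 hxhi)
        · exact min_le_left _ _
        · exact le_trans hxlo (le_min hxk.2 hxhi)
        · exact min_le_right _ _
        · rcases min_choice (v (k + 1)).1 (max w.1 p.1) with h | h
          · exact Or.inr (Or.inl h)
          · rcases max_choice w.1 p.1 with h' | h'
            · exact Or.inr (Or.inr (Or.inl (h.trans h')))
            · exact Or.inr (Or.inr (Or.inr (h.trans h')))
    rw [← hrY]
    exact hG r.1 hrlo hrhi
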